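/- Let S = {s_1, ..., s_l} be a finite set of primes and b ≥ 2 an integer base. The set Ξ^{FF}_{S,b} of real numbers in (0,1) whose b-ary expansion a_1a_2a_3... admits a strictly increasing sequence (n_i) with all numerators u_{n_i} = ∑_{j=1}^{n_i} a_j b^{n_i − j} lying in the multiplicative semigroup M_S generated by S, has Hausdorff dimension zero. -/

import Mathlib

open MeasureTheory Filter Finset
open scoped Classical ENNReal NNReal

-- counting lemma
lemma aux_count (S : Finset ℕ) (b n : ℕ) (hb : 2 ≤ b) :
    ((Finset.range (b ^ n)).filter
      (fun u => u ≠ 0 ∧ ∀ p, p.Prime → p ∣ u → p ∈ S)).card ≤ (b * n + 1) ^ S.card := by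
  classical
  set F := (Finset.range (b ^ n)).filter
      (fun u => u ≠ 0 ∧ ∀ p, p.Prime → p ∣ u → p ∈ S) with hF
  have hbound : ∀ u ∈ F, ∀ p : ℕ, u.factorization p ≤ b * n := by
    intro u hu p
    simp only [hF, Finset.mem_filter, Finset.mem_range] at hu
    obtain ⟨hult, hune, hsm⟩ := hu
    by_cases he : u.factorization p = 0
    · omega
    · have hpmem : p ∈ u.primeFactors := by
        rw [← Nat.support_factorization]; exact Finsupp.mem_support_iff.2 he
      have hp : p.Prime := Nat.prime_of_mem_primeFactors hpmem
      have h1 : p ^ u.factorization p ≤ u := Nat.ordProj_le p hune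
      have h2 : 2 ^ u.factorization p ≤ p ^ u.factorization p :=
        Nat.pow_le_pow_left hp.two_le _
      have h3 : b ^ n ≤ 2 ^ (b * n) := by
        calc b ^ n ≤ (2 ^ b) ^ n := Nat.pow_le_pow_left (Nat.lt_two_pow_self (n := b)).le n
        _ = 2 ^ (b * n) := by rw [← pow_mul]
      have : 2 ^ u.factorization p < 2 ^ (b * n) := by omega
      exact ((Nat.pow_lt_pow_iff_right one_lt_two).1 this).le
  have hinj : Set.InjOn
      (fun u => (fun p : {x // x ∈ S} =>
        (⟨min (Nat.factorization u p) (b * n), by omega⟩ : Fin (b * n + 1)))) F := by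
    intro u hu v hv h
    have hu0 : u ≠ 0 := (Finset.mem_filter.1 hu).2.1
    have hv0 : v ≠ 0 := (Finset.mem_filter.1 hv).2.1
    have hfac : u.factorization = v.factorization := by
      ext p
      by_cases hp : p ∈ S
      · have := congrFun h ⟨p, hp⟩
        have h2 := Fin.mk.injEq _ _ _ _ ▸ this
        have h3 : min (u.factorization p) (b * n) = min (v.factorization p) (b * n) := by
          simpa using congrArg Fin.val this
        rwa [min_eq_left (hbound u hu p), min_eq_left (hbound v hv p)] at h3
      · have hz : ∀ w : ℕ, w ∈ F → w.factorization p = 0 := by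
          intro w hw
          by_contra hne
          have hpmem : p ∈ w.primeFactors := by
            rw [← Nat.support_factorization]; exact Finsupp.mem_support_iff.2 hne
          exact hp ((Finset.mem_filter.1 hw).2.2 p (Nat.prime_of_mem_primeFactors hpmem)
            (Nat.dvd_of_mem_primeFactors hpmem))
        rw [hz u hu, hz v hv]
    exact Nat.factorization_inj hu0 hv0 hfac
  calc F.card ≤ (Finset.univ : Finset ({x // x ∈ S} → Fin (b * n + 1))).card :=
      Finset.card_le_card_of_injOn _ (fun _ _ => Finset.mem_univ _) hinj
  _ = (b * n + 1) ^ S.card := by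
      rw [Finset.card_univ, Fintype.card_fun]
      simp [Fintype.card_coe]

-- digit bound
lemma aux_ub {b : ℕ} (hb : 2 ≤ b) (a : ℕ → ℕ) (ha : ∀ j, a j < b) (N : ℕ) :
    ∑ j ∈ Finset.range N, a j * b ^ (N - 1 - j) < b ^ N := by
  have key : ∀ M, ∑ m ∈ Finset.range M, (b - 1) * b ^ m + 1 = b ^ M := by
    intro M
    induction M with
    | zero => simp
    | succ M ih =>
      rw [Finset.sum_range_succ, pow_succ]
      have h1 : (b - 1) * b ^ M + b ^ M = b ^ M * b := by
        have hh : b - 1 + 1 = b := by omega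
        calc (b - 1) * b ^ M + b ^ M = (b - 1 + 1) * b ^ M := by ring
        _ = b ^ M * b := by rw [hh, mul_comm]
      omega
  have h1 : ∑ j ∈ Finset.range N, a j * b ^ (N - 1 - j)
      ≤ ∑ j ∈ Finset.range N, (b - 1) * b ^ (N - 1 - j) := by
    apply Finset.sum_le_sum
    intro j _
    exact Nat.mul_le_mul_right _ (by have := ha j; omega)
  have h2 : ∑ j ∈ Finset.range N, (b - 1) * b ^ (N - 1 - j)
      = ∑ m ∈ Finset.range N, (b - 1) * b ^ m :=
    Finset.sum_range_reflect (fun m => (b - 1) * b ^ m) N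
  have := key N
  omega

-- summability
lemma aux_summable {b : ℕ} (hb : 2 ≤ b) (a : ℕ → ℕ) (ha : ∀ j, a j < b) :
    Summable (fun j => (a j : ℝ) / (b : ℝ) ^ (j + 1)) := by
  have hB1 : (1 : ℝ) < (b : ℝ) := by
    have : (1 : ℕ) < b := by omega
    exact_mod_cast this
  have hB0 : (0 : ℝ) < (b : ℝ) := by linarith
  refine Summable.of_nonneg_of_le (fun j => by positivity) ?_
    (summable_geometric_of_lt_one (r := 1 / (b:ℝ)) (by positivity)
      (by rw [div_lt_one hB0]; exact hB1))
  · intro j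
    have h1 : (a j : ℝ) ≤ (b : ℝ) := by exact_mod_cast (ha j).le
    have hne : (b : ℝ) ≠ 0 := ne_of_gt hB0
    have h2 : (1 / (b : ℝ)) ^ j = (b : ℝ) / (b : ℝ) ^ (j + 1) := by
      rw [one_div_pow, pow_succ, mul_comm ((b:ℝ) ^ j) (b:ℝ), ← div_div, div_self hne]
    rw [h2]
    exact div_le_div_of_nonneg_right h1 (by positivity)

lemma aux_mem {b : ℕ} (hb : 2 ≤ b) (a : ℕ → ℕ) (ha : ∀ j, a j < b) (N : ℕ) :
    (∑' j : ℕ, (a j : ℝ) / (b : ℝ) ^ (j + 1)) ∈ Set.Icc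
      (((∑ j ∈ Finset.range N, a j * b ^ (N - 1 - j) : ℕ) : ℝ) / (b : ℝ) ^ N)
      ((((∑ j ∈ Finset.range N, a j * b ^ (N - 1 - j) : ℕ) : ℝ) + 1) / (b : ℝ) ^ N) := by
  have hB1 : (1 : ℝ) < (b : ℝ) := by
    have : (1 : ℕ) < b := by omega
    exact_mod_cast this
  have hB0 : (0 : ℝ) < (b : ℝ) := by linarith
  have hne : (b : ℝ) ≠ 0 := ne_of_gt hB0
  have hsum := aux_summable hb a ha
  have hsplit := Summable.sum_add_tsum_nat_add (f := fun j => (a j : ℝ) / (b : ℝ) ^ (j + 1)) N hsum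
  -- partial sum equals u / b^N
  have hpart : ∑ j ∈ Finset.range N, (a j : ℝ) / (b : ℝ) ^ (j + 1)
      = ((∑ j ∈ Finset.range N, a j * b ^ (N - 1 - j) : ℕ) : ℝ) / (b : ℝ) ^ N := by
    push_cast
    rw [Finset.sum_div]
    refine Finset.sum_congr rfl fun j hj => ?_
    rw [Finset.mem_range] at hj
    have hexp : (N - 1 - j) + (j + 1) = N := by omega
    rw [div_eq_div_iff (by positivity) (by positivity)]
    rw [mul_assoc, ← pow_add, hexp]
  -- tail bounds
  set t := ∑' i : ℕ, (a (i + N) : ℝ) / (b : ℝ) ^ (i + N + 1) with ht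
  have hshift : Summable (fun i => (a (i + N) : ℝ) / (b : ℝ) ^ (i + N + 1)) := by
    have := (summable_nat_add_iff (f := fun j => (a j : ℝ) / (b : ℝ) ^ (j + 1)) N).2 hsum
    exact this
  have ht0 : 0 ≤ t := tsum_nonneg fun i => by positivity
  have hgsum : Summable (fun i : ℕ => ((b : ℝ) - 1) / (b : ℝ) ^ (N + 1) * (1 / (b : ℝ)) ^ i) :=
    (summable_geometric_of_lt_one (by positivity) (by rw [div_lt_one hB0]; exact hB1)).mul_left _
  have ht1 : t ≤ 1 / (b : ℝ) ^ N := by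
    have hle : ∀ i : ℕ, (a (i + N) : ℝ) / (b : ℝ) ^ (i + N + 1)
        ≤ ((b : ℝ) - 1) / (b : ℝ) ^ (N + 1) * (1 / (b : ℝ)) ^ i := by
      intro i
      have hg : ((b : ℝ) - 1) / (b : ℝ) ^ (N + 1) * (1 / (b : ℝ)) ^ i
          = ((b : ℝ) - 1) / (b : ℝ) ^ (i + N + 1) := by
        rw [one_div_pow, div_mul_div_comm, mul_one, ← pow_add]
        ring_nf
      rw [hg]
      have h1 : (a (i + N) : ℝ) ≤ (b : ℝ) - 1 := by
        have : a (i + N) + 1 ≤ b := ha (i + N)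
        have h2 : ((a (i + N) + 1 : ℕ) : ℝ) ≤ (b : ℝ) := by exact_mod_cast this
        push_cast at h2
        linarith
      exact div_le_div_of_nonneg_right h1 (by positivity)
    have := Summable.tsum_le_tsum hle hshift hgsum
    refine this.trans ?_
    rw [tsum_mul_left, tsum_geometric_of_lt_one (by positivity) (by rw [div_lt_one hB0]; exact hB1)]
    have hb1ne : (b : ℝ) - 1 ≠ 0 := by linarith
    have h1 : (1 : ℝ) - 1 / (b : ℝ) = ((b : ℝ) - 1) / (b : ℝ) := by field_simp
    have hb1pos : (0:ℝ) < (b:ℝ) - 1 := by linarith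
    rw [h1, inv_div]
    rw [div_mul_div_comm]
    rw [div_le_div_iff₀ (by positivity) (by positivity)]
    ring_nf
    exact le_rfl

  rw [← hsplit, hpart]
  have hdiv : ((∑ j ∈ Finset.range N, a j * b ^ (N - 1 - j) : ℕ) : ℝ) / (b : ℝ) ^ N
      + 1 / (b : ℝ) ^ N
      = (((∑ j ∈ Finset.range N, a j * b ^ (N - 1 - j) : ℕ) : ℝ) + 1) / (b : ℝ) ^ N := by
    rw [add_div]
  constructor
  · linarith
  · linarith

noncomputable def smoothF (S : Finset ℕ) (b n : ℕ) : Finset ℕ :=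
  (Finset.range (b ^ n)).filter (fun u => u ≠ 0 ∧ ∀ p, p.Prime → p ∣ u → p ∈ S)

noncomputable def cover (S : Finset ℕ) (b k : ℕ) (nu : ℕ × ℕ) : Set ℝ :=
  if k ≤ nu.1 ∧ nu.2 ∈ smoothF S b nu.1 then
    Set.Icc ((nu.2 : ℝ) / (b : ℝ) ^ nu.1) (((nu.2 : ℝ) + 1) / (b : ℝ) ^ nu.1) else ∅

noncomputable def fF (S : Finset ℕ) (b : ℕ) (d : ℝ) (n : ℕ) : ℝ≥0∞ :=
  (((b * n + 1) ^ S.card : ℕ) : ℝ≥0∞) * ENNReal.ofReal (((1 / (b : ℝ)) ^ d) ^ n)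

lemma basic1 {b : ℕ} (hb : 2 ≤ b) : (1 : ℝ) < (b : ℝ) := by
  have : (1 : ℕ) < b := by omega
  exact_mod_cast this

lemma cover_diam {S : Finset ℕ} {b : ℕ} (hb : 2 ≤ b) (k : ℕ) (nu : ℕ × ℕ) :
    Metric.ediam (cover S b k nu) ≤ ENNReal.ofReal (1 / (b : ℝ) ^ k) := by
  have hB1 := basic1 hb
  have hB0 : (0 : ℝ) < (b : ℝ) := by linarith
  rw [cover]
  by_cases h : k ≤ nu.1 ∧ nu.2 ∈ smoothF S b nu.1
  · rw [if_pos h, Real.ediam_Icc]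
    have he : ((nu.2 : ℝ) + 1) / (b : ℝ) ^ nu.1 - (nu.2 : ℝ) / (b : ℝ) ^ nu.1
        = 1 / (b : ℝ) ^ nu.1 := by ring
    rw [he]
    exact ENNReal.ofReal_le_ofReal (one_div_le_one_div_of_le (by positivity)
      (pow_le_pow_right₀ hB1.le h.1))
  · rw [if_neg h, Metric.ediam_empty]
    exact zero_le

lemma cover_pow_diam {S : Finset ℕ} {b : ℕ} (hb : 2 ≤ b) {d : ℝ} (hd : 0 < d)
    (k : ℕ) (nu : ℕ × ℕ) :
    Metric.ediam (cover S b k nu) ^ d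
      = if k ≤ nu.1 ∧ nu.2 ∈ smoothF S b nu.1
          then ENNReal.ofReal (((1 / (b : ℝ)) ^ d) ^ nu.1) else 0 := by
  have hB1 := basic1 hb
  have hB0 : (0 : ℝ) < (b : ℝ) := by linarith
  rw [cover]
  by_cases h : k ≤ nu.1 ∧ nu.2 ∈ smoothF S b nu.1
  · rw [if_pos h, if_pos h, Real.ediam_Icc]
    have he : ((nu.2 : ℝ) + 1) / (b : ℝ) ^ nu.1 - (nu.2 : ℝ) / (b : ℝ) ^ nu.1
        = (1 / (b : ℝ)) ^ nu.1 := by rw [one_div_pow]; ring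
    rw [he, ENNReal.ofReal_rpow_of_pos (by positivity)]
    congr 1
    rw [← Real.rpow_natCast (1 / (b : ℝ)) nu.1, ← Real.rpow_mul (by positivity),
      mul_comm, Real.rpow_mul (by positivity), Real.rpow_natCast]
  · rw [if_neg h, if_neg h, Metric.ediam_empty]
    exact ENNReal.zero_rpow_of_pos hd

lemma cover_sum {S : Finset ℕ} {b : ℕ} (hb : 2 ≤ b) {d : ℝ} (hd : 0 < d) (k : ℕ) :
    (∑' nu : ℕ × ℕ, Metric.ediam (cover S b k nu) ^ d) ≤ ∑' m : ℕ, fF S b d (m + k) := by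
  set y : ℝ := (1 / (b : ℝ)) ^ d with hy
  calc (∑' nu : ℕ × ℕ, Metric.ediam (cover S b k nu) ^ d)
      = ∑' (n : ℕ) (u : ℕ),
          (if k ≤ n ∧ u ∈ smoothF S b n then ENNReal.ofReal (y ^ n) else 0) := by
        rw [tsum_congr (cover_pow_diam hb hd k), ENNReal.tsum_prod']
    _ = ∑' n : ℕ, (if k ≤ n then
          ((smoothF S b n).card : ℝ≥0∞) * ENNReal.ofReal (y ^ n) else 0) := by
        refine tsum_congr fun n => ?_
        by_cases hk : k ≤ n
        · rw [if_pos hk]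
          rw [tsum_eq_sum (s := smoothF S b n) (fun u hu => by
            rw [if_neg]; exact fun hc => hu hc.2)]
          rw [Finset.sum_congr rfl (fun u hu => if_pos ⟨hk, hu⟩), Finset.sum_const,
            nsmul_eq_mul]
        · rw [if_neg hk]
          simp only [hk, false_and, if_false]
          exact tsum_zero
    _ ≤ ∑' n : ℕ, (if k ≤ n then fF S b d n else 0) := by
        refine ENNReal.tsum_le_tsum fun n => ?_
        by_cases hk : k ≤ n
        · rw [if_pos hk, if_pos hk, fF]
          refine mul_le_mul_left ?_ _
          have := aux_count S b n hb
          rw [smoothF]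
          exact_mod_cast this
        · rw [if_neg hk, if_neg hk]
    _ = ∑' m : ℕ, (if k ≤ m + k then fF S b d (m + k) else 0) := by
        rw [← Summable.sum_add_tsum_nat_add' (f := fun n => if k ≤ n then fF S b d n else 0) (k := k)
          ENNReal.summable]
        rw [Finset.sum_eq_zero (fun i hi => by
          rw [Finset.mem_range] at hi
          rw [if_neg (by omega)]), zero_add]
    _ = ∑' m : ℕ, fF S b d (m + k) := by
        refine tsum_congr fun m => ?_
        rw [if_pos (Nat.le_add_left k m)]

lemma fF_ne_top {S : Finset ℕ} {b : ℕ} (hb : 2 ≤ b) {d : ℝ} (hd : 0 < d) :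
    ∑' n : ℕ, fF S b d n ≠ ⊤ := by
  have hB1 := basic1 hb
  have hB0 : (0 : ℝ) < (b : ℝ) := by linarith
  set y : ℝ := (1 / (b : ℝ)) ^ d with hy
  have hy0 : 0 < y := Real.rpow_pos_of_pos (by positivity) _
  have hy1 : y < 1 := Real.rpow_lt_one (by positivity) (by rw [div_lt_one hB0]; exact hB1) hd
  set g : ℕ → ℝ := fun n => (((b * n + 1) ^ S.card : ℕ) : ℝ) * y ^ n with hg
  have hgsummable : Summable g := by
    have h1 : Summable (fun n : ℕ => (n : ℝ) ^ S.card * y ^ n) :=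
      summable_pow_mul_geometric_of_norm_lt_one S.card
        (by rw [Real.norm_eq_abs, abs_of_nonneg hy0.le]; exact hy1)
    have h2 := (summable_nat_add_iff (f := fun n : ℕ => (n : ℝ) ^ S.card * y ^ n) 1).2 h1
    have h3 : Summable (fun n : ℕ => ((n : ℝ) + 1) ^ S.card * y ^ n) := by
      have h4 := h2.mul_left y⁻¹
      refine h4.congr fun n => ?_
      show y⁻¹ * (((n + 1 : ℕ) : ℝ) ^ S.card * y ^ (n + 1)) = _
      push_cast
      rw [pow_succ]
      field_simp
    refine Summable.of_nonneg_of_le (fun n => by positivity) ?_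
      (h3.mul_left (((b : ℝ) + 1) ^ S.card))
    intro n
    show (((b * n + 1) ^ S.card : ℕ) : ℝ) * y ^ n ≤ _
    have h5 : (((b * n + 1) ^ S.card : ℕ) : ℝ)
        ≤ ((b : ℝ) + 1) ^ S.card * ((n : ℝ) + 1) ^ S.card := by
      rw [← mul_pow]
      push_cast
      apply pow_le_pow_left₀ (by positivity)
      nlinarith [Nat.cast_nonneg (α := ℝ) b, Nat.cast_nonneg (α := ℝ) n]
    calc (((b * n + 1) ^ S.card : ℕ) : ℝ) * y ^ n
        ≤ (((b : ℝ) + 1) ^ S.card * ((n : ℝ) + 1) ^ S.card) * y ^ n :=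
          mul_le_mul_of_nonneg_right h5 (by positivity)
      _ = ((b : ℝ) + 1) ^ S.card * (((n : ℝ) + 1) ^ S.card * y ^ n) := by ring
  have heq : ∀ n, fF S b d n = ENNReal.ofReal (g n) := by
    intro n
    rw [fF, hg, ENNReal.ofReal_mul (by positivity)]
    congr 1
    rw [← ENNReal.ofReal_natCast]
  rw [tsum_congr heq, ← ENNReal.ofReal_tsum_of_nonneg (fun n => by positivity) hgsummable]
  exact ENNReal.ofReal_ne_top

lemma measure_zero {S : Finset ℕ} {b : ℕ} (hb : 2 ≤ b) (A : Set ℝ)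
    (hsub : ∀ k : ℕ, A ⊆ ⋃ nu : ℕ × ℕ, cover S b k nu) (d : ℝ≥0) (hd : 0 < d) :
    μH[(d : ℝ)] A = 0 := by
  have hB1 := basic1 hb
  have hB0 : (0 : ℝ) < (b : ℝ) := by linarith
  have hdR : (0 : ℝ) < (d : ℝ) := by exact_mod_cast hd
  have hr : Tendsto (fun k : ℕ => ENNReal.ofReal (1 / (b : ℝ) ^ k)) atTop (nhds 0) := by
    have h1 : Tendsto (fun k : ℕ => (1 / (b : ℝ)) ^ k) atTop (nhds 0) :=
      tendsto_pow_atTop_nhds_zero_of_lt_one (by positivity) (by rw [div_lt_one hB0]; exact hB1)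
    have h2 := ENNReal.tendsto_ofReal (a := 0) h1
    rw [ENNReal.ofReal_zero] at h2
    convert h2 using 2 with k
    rw [one_div_pow]
  have hcover := MeasureTheory.Measure.hausdorffMeasure_le_liminf_tsum (d : ℝ) A
    (fun k => ENNReal.ofReal (1 / (b : ℝ) ^ k)) hr (fun k => cover S b k)
    (Filter.Eventually.of_forall fun k nu => cover_diam hb k nu)
    (Filter.Eventually.of_forall hsub)
  have hF : Tendsto (fun k : ℕ => ∑' m : ℕ, fF S b (d : ℝ) (m + k)) atTop (nhds 0) :=
    ENNReal.tendsto_sum_nat_add _ (fF_ne_top hb hdR)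
  have hliminf : liminf (fun k : ℕ => ∑' nu : ℕ × ℕ, Metric.ediam (cover S b k nu) ^ (d : ℝ))
      atTop ≤ 0 := by
    calc liminf (fun k : ℕ => ∑' nu : ℕ × ℕ, Metric.ediam (cover S b k nu) ^ (d : ℝ)) atTop
        ≤ liminf (fun k : ℕ => ∑' m : ℕ, fF S b (d : ℝ) (m + k)) atTop :=
          liminf_le_liminf (Filter.Eventually.of_forall fun k => cover_sum hb hdR k)
      _ = 0 := hF.liminf_eq
  exact le_antisymm (hcover.trans hliminf) zero_le

theorem stmt_8 (S : Finset ℕ) (hS : ∀ p ∈ S, p.Prime) (b : ℕ) (hb : 2 ≤ b) :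
    dimH {ξ : ℝ | ξ ∈ Set.Ioo 0 1 ∧ ∃ a : ℕ → ℕ, (∀ j, a j < b) ∧
      ξ = ∑' j : ℕ, (a j : ℝ) / (b : ℝ) ^ (j + 1) ∧
      ∃ n : ℕ → ℕ, StrictMono n ∧ (∀ i, 0 < n i) ∧
        ∀ i p, p.Prime → p ∣ (∑ j ∈ Finset.range (n i), a j * b ^ (n i - 1 - j)) → p ∈ S} = 0 := by
  have hsub : ∀ k : ℕ, {ξ : ℝ | ξ ∈ Set.Ioo 0 1 ∧ ∃ a : ℕ → ℕ, (∀ j, a j < b) ∧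
      ξ = ∑' j : ℕ, (a j : ℝ) / (b : ℝ) ^ (j + 1) ∧
      ∃ n : ℕ → ℕ, StrictMono n ∧ (∀ i, 0 < n i) ∧
        ∀ i p, p.Prime → p ∣ (∑ j ∈ Finset.range (n i), a j * b ^ (n i - 1 - j)) → p ∈ S}
      ⊆ ⋃ nu : ℕ × ℕ, cover S b k nu := by
    intro k ξ hξ
    obtain ⟨hIoo, a, ha, hξeq, n, hmono, hpos, hsm⟩ := hξ
    have hkN : k ≤ n k := hmono.le_apply
    have hu_lt : ∑ j ∈ Finset.range (n k), a j * b ^ (n k - 1 - j) < b ^ (n k) :=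
      aux_ub hb a ha (n k)
    have hu_ne : ∑ j ∈ Finset.range (n k), a j * b ^ (n k - 1 - j) ≠ 0 := by
      obtain ⟨p, hpge, hp⟩ := Nat.exists_infinite_primes (S.sup id + 1)
      intro h0
      have hpS : p ∈ S := hsm k p hp (h0 ▸ dvd_zero p)
      have : p ≤ S.sup id := Finset.le_sup (f := id) hpS
      omega
    have hmemF : ∑ j ∈ Finset.range (n k), a j * b ^ (n k - 1 - j) ∈ smoothF S b (n k) := by
      rw [smoothF]
      exact Finset.mem_filter.2 ⟨Finset.mem_range.2 hu_lt, hu_ne,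
        fun p hp hdvd => hsm k p hp hdvd⟩
    refine Set.mem_iUnion.2 ⟨(n k, ∑ j ∈ Finset.range (n k), a j * b ^ (n k - 1 - j)), ?_⟩
    rw [cover, if_pos ⟨hkN, hmemF⟩]
    rw [hξeq]
    exact aux_mem hb a ha (n k)
  refine le_antisymm ?_ zero_le
  refine ENNReal.le_of_forall_pos_le_add fun ε hε _ => ?_
  rw [zero_add]
  exact dimH_le_of_hausdorffMeasure_ne_top
    (by rw [measure_zero hb _ hsub ε hε]; exact ENNReal.zero_ne_top)
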